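/- For real numbers a1, a2 ≥ 0 with a1 + a2 < 2 and positive reals A1, A2, A3, the double integral over (x,y) ∈ (0,∞)² of x^{1+2a1} y^{1+2a2} A1 A2 A3 / (x²A1 + y²A2 + A3)⁴ dx dy equals A1^{−a1} A2^{−a2} A3^{a1+a2−1} · (1/4) · B(2+a1+a2, 2−a1−a2) · B(1+a1, 1+a2), where B is the Beta function. -/

import Mathlib

open MeasureTheory Real

/-- The Euler Beta function `B(p,q) = Γ(p)Γ(q)/Γ(p+q)`. -/
noncomputable def realBeta (p q : ℝ) : ℝ := Real.Gamma p * Real.Gamma q / Real.Gamma (p + q)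

open Set

lemma realBeta_eq_integral {p q : ℝ} (hp : 0 < p) (hq : 0 < q) :
    ∫ x in (0:ℝ)..1, x ^ (p-1) * (1-x) ^ (q-1) = realBeta p q := by
  have h := Complex.Gamma_mul_Gamma_eq_betaIntegral (s := (p:ℂ)) (t := (q:ℂ))
    (by simpa using hp) (by simpa using hq)
  have hbeta : Complex.betaIntegral (p:ℂ) (q:ℂ)
      = ((∫ x in (0:ℝ)..1, x ^ (p-1) * (1-x) ^ (q-1) : ℝ) : ℂ) := by
    rw [Complex.betaIntegral, ← intervalIntegral.integral_ofReal]
    refine intervalIntegral.integral_congr (fun x hx => ?_)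
    rw [uIcc_of_le zero_le_one] at hx
    rw [Complex.ofReal_mul, Complex.ofReal_cpow hx.1,
      Complex.ofReal_cpow (by linarith [hx.2] : (0:ℝ) ≤ 1 - x)]
    push_cast
    ring
  rw [hbeta, ← Complex.ofReal_add, Complex.Gamma_ofReal, Complex.Gamma_ofReal,
    Complex.Gamma_ofReal, ← Complex.ofReal_mul, ← Complex.ofReal_mul] at h
  have h3 := Complex.ofReal_injective h
  have hGpq : Real.Gamma (p + q) ≠ 0 := (Real.Gamma_pos_of_pos (by linarith)).ne'
  rw [realBeta, eq_div_iff hGpq]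
  linarith [h3]

lemma realBeta_Ioi {p q : ℝ} (hp : 0 < p) (hq : 0 < q) :
    ∫ t in Ioi (0:ℝ), t ^ (p-1) * (1+t) ^ (-(p+q)) = realBeta p q := by
  set f : ℝ → ℝ := fun x => x / (1 - x) with hf
  set f' : ℝ → ℝ := fun x => ((1 - x) ^ 2)⁻¹ with hf'
  have hder : ∀ x ∈ Ioo (0:ℝ) 1, HasDerivWithinAt f (f' x) (Ioo 0 1) x := by
    intro x hx
    have hne : (1 : ℝ) - x ≠ 0 := by nlinarith [hx.2]
    have : HasDerivAt f ((1 * (1 - x) - x * (0 - 1)) / (1 - x) ^ 2) x :=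
      (hasDerivAt_id x).div ((hasDerivAt_const x 1).sub (hasDerivAt_id x)) hne
    have h2 : (1 * (1 - x) - x * (0 - 1)) / (1 - x) ^ 2 = f' x := by
      simp only [hf']; ring
    exact (h2 ▸ this).hasDerivWithinAt
  have hinj : InjOn f (Ioo 0 1) := by
    intro a ha b hb h
    have hna : (1:ℝ) - a ≠ 0 := by nlinarith [ha.2]
    have hnb : (1:ℝ) - b ≠ 0 := by nlinarith [hb.2]
    have : a * (1 - b) = b * (1 - a) := by
      simp only [hf] at h; rw [div_eq_div_iff hna hnb] at h; linarith [h]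
    nlinarith [this]
  have himg : f '' Ioo 0 1 = Ioi 0 := by
    ext y
    constructor
    · rintro ⟨x, hx, rfl⟩
      exact div_pos hx.1 (by linarith [hx.2])
    · intro hy
      have hy' : (0:ℝ) < 1 + y := by linarith [mem_Ioi.mp hy]
      refine ⟨y / (1 + y), ⟨div_pos (mem_Ioi.mp hy) hy', (div_lt_one hy').mpr (by linarith)⟩, ?_⟩
      simp only [hf]
      rw [div_eq_iff]
      · field_simp; ring
      · intro h
        have : (1:ℝ) - y / (1+y) = 1/(1+y) := by field_simp; ring
        rw [this] at h
        exact (one_div_ne_zero hy'.ne') h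
  have hsub := integral_image_eq_integral_abs_deriv_smul measurableSet_Ioo hder hinj
    (fun t => t ^ (p-1) * (1+t) ^ (-(p+q)))
  rw [himg] at hsub
  rw [hsub]
  have : ∀ x ∈ Ioo (0:ℝ) 1,
      |f' x| • (f x ^ (p-1) * (1 + f x) ^ (-(p+q))) = x ^ (p-1) * (1-x) ^ (q-1) := by
    intro x hx
    have h0 : (0:ℝ) < x := hx.1
    have h1 : (0:ℝ) < 1 - x := by linarith [hx.2]
    have hfx : (1:ℝ) + f x = (1 - x)⁻¹ := by
      simp only [hf]; field_simp; ring
    have hfx2 : f x ^ (p - 1) = x ^ (p-1) * ((1-x) ^ (p-1))⁻¹ := by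
      simp only [hf]
      rw [Real.div_rpow h0.le h1.le, div_eq_mul_inv]
    rw [hfx, hfx2, Real.inv_rpow h1.le, smul_eq_mul]
    rw [abs_of_pos (by positivity : 0 < f' x), ← Real.rpow_neg h1.le,
      ← Real.rpow_neg h1.le, neg_neg]
    have e1 : f' x = (1-x) ^ (-2 : ℝ) := by
      simp only [hf']
      rw [← Real.rpow_natCast (1-x) 2, ← Real.rpow_neg h1.le]
      norm_num
    rw [e1]
    calc (1-x)^(-2:ℝ) * (x ^ (p-1) * (1-x) ^ (-(p-1)) * (1-x) ^ (p+q))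
        = x ^ (p-1) * ((1-x)^(-2:ℝ) * (1-x) ^ (-(p-1)) * (1-x) ^ (p+q)) := by ring
      _ = x ^ (p-1) * (1-x) ^ (-2 + -(p-1) + (p+q)) := by
          rw [← Real.rpow_add h1, ← Real.rpow_add h1]
      _ = x ^ (p-1) * (1-x) ^ (q-1) := by rw [show (-2:ℝ) + -(p-1) + (p+q) = q - 1 by ring]
  rw [setIntegral_congr_fun measurableSet_Ioo this, ← realBeta_eq_integral hp hq,
    intervalIntegral.integral_of_le zero_le_one, integral_Ioc_eq_integral_Ioo]

lemma sq_int {p q : ℝ} (hp : 0 < p) (hq : 0 < q) :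
    ∫ x in Ioi (0:ℝ), x ^ (2*p-1) * (1 + x^2) ^ (-(p+q)) = (1/2) * realBeta p q := by
  have h := integral_comp_rpow_Ioi_of_pos
    (g := fun t => t ^ (p-1) * (1+t) ^ (-(p+q))) (p := 2) (by norm_num)
  rw [realBeta_Ioi hp hq] at h
  beta_reduce at h
  have hcong : ∀ x ∈ Ioi (0:ℝ),
      ((2:ℝ) * x ^ ((2:ℝ) - 1)) • ((x ^ (2:ℝ)) ^ (p-1) * (1 + x ^ (2:ℝ)) ^ (-(p+q)))
      = 2 * (x ^ (2*p-1) * (1 + x^2) ^ (-(p+q))) := by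
    intro x hx
    have hx0 : (0:ℝ) < x := hx
    have e1 : (x ^ (2:ℝ)) = x ^ (2:ℕ) := by
      rw [← Real.rpow_natCast x 2]; norm_num
    have e2 : ((x ^ (2:ℕ) : ℝ)) ^ (p-1) = x ^ (2*(p-1)) := by
      rw [← Real.rpow_natCast x 2, ← Real.rpow_mul hx0.le]; norm_num
    have e3 : x ^ (2*p-1) = x * x ^ (2*(p-1)) := by
      rw [show 2*p-1 = 1+2*(p-1) by ring, Real.rpow_add hx0, Real.rpow_one]
    rw [smul_eq_mul, e1, e2, e3, show (2:ℝ)-1 = 1 by norm_num, Real.rpow_one]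
    ring
  rw [setIntegral_congr_fun measurableSet_Ioi hcong, integral_const_mul] at h
  linarith [h]

lemma key_int {p q B C : ℝ} (hp : 0 < p) (hq : 0 < q) (hB : 0 < B) (hC : 0 < C) :
    ∫ y in Ioi (0:ℝ), y ^ (2*p-1) * (C + B * y^2) ^ (-(p+q))
      = (1/2) * B ^ (-p) * C ^ (-q) * realBeta p q := by
  set c : ℝ := Real.sqrt (C / B) with hc
  have hc0 : 0 < c := Real.sqrt_pos.mpr (div_pos hC hB)
  have hscale := integral_comp_mul_left_Ioi
    (g := fun y => y ^ (2*p-1) * (C + B * y^2) ^ (-(p+q))) 0 hc0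
  rw [mul_zero] at hscale
  beta_reduce at hscale
  have hBc : B * c ^ 2 = C := by
    rw [hc, Real.sq_sqrt (div_pos hC hB).le]
    field_simp
  have hcong : ∀ x ∈ Ioi (0:ℝ),
      (c * x) ^ (2*p-1) * (C + B * (c * x)^2) ^ (-(p+q))
      = (c ^ (2*p-1) * C ^ (-(p+q))) * (x ^ (2*p-1) * (1 + x^2) ^ (-(p+q))) := by
    intro x hx
    have hx0 : (0:ℝ) < x := hx
    have h1 : C + B * (c * x)^2 = C * (1 + x^2) := by
      rw [mul_pow]; nlinarith [hBc]
    rw [h1, Real.mul_rpow hc0.le hx0.le, Real.mul_rpow hC.le (by positivity)]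
    ring
  rw [setIntegral_congr_fun measurableSet_Ioi hcong, integral_const_mul,
    sq_int hp hq] at hscale
  have hmain : ∫ y in Ioi (0:ℝ), y ^ (2*p-1) * (C + B * y^2) ^ (-(p+q))
      = c * (c ^ (2*p-1) * C ^ (-(p+q)) * ((1/2) * realBeta p q)) := by
    rw [hscale, smul_eq_mul, ← mul_assoc, mul_inv_cancel₀ hc0.ne', one_mul]
  rw [hmain]
  have hcc : c * c ^ (2*p-1) = (C/B) ^ p := by
    have e : c ^ ((1:ℝ)+(2*p-1)) = c * c^(2*p-1) := by
      rw [Real.rpow_add hc0, Real.rpow_one]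
    rw [← e, hc, Real.sqrt_eq_rpow, ← Real.rpow_mul (div_pos hC hB).le,
      show (1/2:ℝ)*((1:ℝ)+(2*p-1)) = p by ring]
  have e4 : (C/B) ^ p * C ^ (-(p+q)) = B ^ (-p) * C ^ (-q) := by
    rw [Real.div_rpow hC.le hB.le, div_eq_mul_inv, ← Real.rpow_neg hB.le]
    calc C^p * B^(-p) * C^(-(p+q)) = B^(-p) * (C^p * C^(-(p+q))) := by ring
      _ = B^(-p) * C^(p + -(p+q)) := by rw [← Real.rpow_add hC]
      _ = B^(-p) * C^(-q) := by rw [show p + -(p+q) = -q by ring]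
  calc c * (c ^ (2*p-1) * C ^ (-(p+q)) * ((1/2) * realBeta p q))
      = (c * c ^ (2*p-1)) * C ^ (-(p+q)) * ((1/2) * realBeta p q) := by ring
    _ = ((C/B) ^ p * C ^ (-(p+q))) * ((1/2) * realBeta p q) := by rw [hcc]
    _ = (B ^ (-p) * C ^ (-q)) * ((1/2) * realBeta p q) := by rw [e4]
    _ = (1/2) * B ^ (-p) * C ^ (-q) * realBeta p q := by ring

lemma beta_identity {a1 a2 : ℝ} (ha1 : 0 ≤ a1) (ha2 : 0 ≤ a2) (hsum : a1 + a2 < 2) :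
    realBeta (1+a2) (3-a2) * realBeta (1+a1) (2-a1-a2)
      = realBeta (2+a1+a2) (2-a1-a2) * realBeta (1+a1) (1+a2) := by
  have h4 : Real.Gamma 4 ≠ 0 := (Real.Gamma_pos_of_pos (by norm_num)).ne'
  have h3a : Real.Gamma (3-a2) ≠ 0 := (Real.Gamma_pos_of_pos (by linarith)).ne'
  have h2a : Real.Gamma (2+a1+a2) ≠ 0 := (Real.Gamma_pos_of_pos (by linarith)).ne'
  simp only [realBeta]
  rw [show (1+a2)+(3-a2) = (4:ℝ) by ring, show (1+a1)+(2-a1-a2) = 3-a2 by ring,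
    show (2+a1+a2)+(2-a1-a2) = (4:ℝ) by ring, show (1+a1)+(1+a2) = 2+a1+a2 by ring]
  field_simp

/-- The radial-angular reduction of the fiber integral (case r = 2). -/
theorem stmt_1 (a1 a2 A1 A2 A3 : ℝ) (ha1 : 0 ≤ a1) (ha2 : 0 ≤ a2)
    (hsum : a1 + a2 < 2) (hA1 : 0 < A1) (hA2 : 0 < A2) (hA3 : 0 < A3) :
    ∫ x in Set.Ioi (0 : ℝ), ∫ y in Set.Ioi (0 : ℝ),
        (x ^ (1 + 2 * a1) * y ^ (1 + 2 * a2) * (A1 * A2 * A3)) /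
          (x ^ 2 * A1 + y ^ 2 * A2 + A3) ^ 4
      = A1 ^ (-a1) * A2 ^ (-a2) * A3 ^ (a1 + a2 - 1) * (1 / 4) *
          realBeta (2 + a1 + a2) (2 - a1 - a2) * realBeta (1 + a1) (1 + a2) := by
  have hp2 : (0:ℝ) < 1 + a2 := by linarith
  have hq2 : (0:ℝ) < 3 - a2 := by linarith
  have hp1 : (0:ℝ) < 1 + a1 := by linarith
  have hq1 : (0:ℝ) < 2 - a1 - a2 := by linarith
  set β2 := realBeta (1+a2) (3-a2) with hβ2
  set β1 := realBeta (1+a1) (2-a1-a2) with hβ1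
  have hinner : ∀ x ∈ Ioi (0:ℝ),
      (∫ y in Ioi (0:ℝ), (x ^ (1 + 2 * a1) * y ^ (1 + 2 * a2) * (A1 * A2 * A3)) /
          (x ^ 2 * A1 + y ^ 2 * A2 + A3) ^ 4)
      = (x ^ (1 + 2*a1) * (A1*A2*A3)) *
          ((1/2) * A2 ^ (-(1+a2)) * (x^2*A1 + A3) ^ (-(3-a2)) * β2) := by
    intro x hx
    have hx0 : (0:ℝ) < x := hx
    have hC : (0:ℝ) < x^2*A1 + A3 := by positivity
    have hcong : ∀ y ∈ Ioi (0:ℝ),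
        (x ^ (1 + 2 * a1) * y ^ (1 + 2 * a2) * (A1 * A2 * A3)) /
          (x ^ 2 * A1 + y ^ 2 * A2 + A3) ^ 4
        = (x ^ (1 + 2*a1) * (A1*A2*A3)) *
            (y ^ (2*(1+a2)-1) * ((x^2*A1 + A3) + A2 * y^2) ^ (-((1+a2)+(3-a2)))) := by
      intro y hy
      have hy0 : (0:ℝ) < y := hy
      have hD : (0:ℝ) < x^2*A1 + y^2*A2 + A3 := by positivity
      have e1 : ((x^2*A1 + A3) + A2 * y^2) ^ (-((1+a2)+(3-a2)) : ℝ)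
          = ((x ^ 2 * A1 + y ^ 2 * A2 + A3) ^ 4)⁻¹ := by
        rw [show (x^2*A1 + A3) + A2*y^2 = x^2*A1 + y^2*A2 + A3 by ring,
          show -((1+a2)+(3-a2)) = -(((4:ℕ):ℝ)) by push_cast; ring,
          Real.rpow_neg hD.le, Real.rpow_natCast]
      have e2 : y ^ (2*(1+a2)-1) = y ^ (1+2*a2) := by
        rw [show 2*(1+a2)-1 = 1+2*a2 by ring]
      rw [e1, e2, div_eq_mul_inv]
      ring
    rw [setIntegral_congr_fun measurableSet_Ioi hcong, integral_const_mul,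
      key_int hp2 hq2 hA2 hC]
  rw [setIntegral_congr_fun measurableSet_Ioi hinner]
  have hcong2 : ∀ x ∈ Ioi (0:ℝ),
      (x ^ (1 + 2*a1) * (A1*A2*A3)) *
        ((1/2) * A2 ^ (-(1+a2)) * (x^2*A1 + A3) ^ (-(3-a2)) * β2)
      = ((A1*A2*A3) * (1/2) * A2 ^ (-(1+a2)) * β2) *
          (x ^ (2*(1+a1)-1) * (A3 + A1 * x^2) ^ (-((1+a1)+(2-a1-a2)))) := by
    intro x hx
    rw [show (2:ℝ)*(1+a1)-1 = 1+2*a1 by ring, show A3 + A1*x^2 = x^2*A1 + A3 by ring,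
      show -((1+a1)+(2-a1-a2)) = -(3-a2) by ring]
    ring
  rw [setIntegral_congr_fun measurableSet_Ioi hcong2, integral_const_mul,
    key_int hp1 hq1 hA1 hA3]
  have hb := beta_identity ha1 ha2 hsum
  rw [← hβ2, ← hβ1] at hb
  rw [show (-a1:ℝ) = 1 + -(1+a1) by ring, show (-a2:ℝ) = 1 + -(1+a2) by ring,
    show a1+a2-1 = 1 + -(2-a1-a2) by ring,
    Real.rpow_add hA1, Real.rpow_add hA2, Real.rpow_add hA3,
    Real.rpow_one, Real.rpow_one, Real.rpow_one]
  linear_combination ((1/4) * A1 * A2 * A3 * A1 ^ (-(1+a1)) * A2 ^ (-(1+a2))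
    * A3 ^ (-(2-a1-a2))) * hb
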